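/- Let S be the part of the tetrahedron T (with vertices p₀=(0,0,2H), p₁=(0,R,H), p₂=(0,0,H), p₃=(R·sin72°,R·cos72°,H), H ≈ 0.760071, R ≈ 0.649841) lying outside the closed unit ball centered at the origin. Then vol(T ∩ {z ≥ 1}) ≤ vol(S) ≤ vol(tetrahedron p₀p₁p₃p₄) where p₄=(0,0,1); numerically 0.0163 ≤ vol(S) ≤ 0.0349. -/

import Mathlib

open Real MeasureTheory Set Pointwise

set_option maxHeartbeats 2000000

section Aux


lemma vol_tri (a : ℝ) (ha : 0 ≤ a) :
    volume {p : ℝ × ℝ | 0 ≤ p.1 ∧ 0 ≤ p.2 ∧ p.1 + p.2 ≤ a} = ENNReal.ofReal (a^2/2) := by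
  have hmeas : MeasurableSet {p : ℝ × ℝ | 0 ≤ p.1 ∧ 0 ≤ p.2 ∧ p.1 + p.2 ≤ a} := by
    apply MeasurableSet.inter
    · exact measurableSet_le measurable_const measurable_fst
    apply MeasurableSet.inter
    · exact measurableSet_le measurable_const measurable_snd
    · exact measurableSet_le (measurable_fst.add measurable_snd) measurable_const
  rw [MeasureTheory.Measure.volume_eq_prod, Measure.prod_apply hmeas]
  have hslice : ∀ x : ℝ, (Prod.mk x ⁻¹' {p : ℝ × ℝ | 0 ≤ p.1 ∧ 0 ≤ p.2 ∧ p.1 + p.2 ≤ a})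
      = if 0 ≤ x then Icc 0 (a - x) else ∅ := by
    intro x
    by_cases hx : 0 ≤ x <;> ext y <;> simp [hx, Set.mem_Icc] <;> intros <;> constructor <;> intros <;> linarith
  have : (fun x => volume (Prod.mk x ⁻¹' {p : ℝ × ℝ | 0 ≤ p.1 ∧ 0 ≤ p.2 ∧ p.1 + p.2 ≤ a}))
      = fun x => (Ici (0:ℝ)).indicator (fun x => ENNReal.ofReal (a - x)) x := by
    funext x
    rw [hslice]
    by_cases hx : 0 ≤ x
    · simp [hx, Real.volume_Icc, Set.indicator_of_mem (mem_Ici.2 hx)]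
    · simp [hx, Set.indicator_of_notMem (by simpa using hx : x ∉ Ici (0:ℝ))]
  rw [this]
  rw [lintegral_indicator measurableSet_Ici _]
  have hsplit : Ici (0:ℝ) = Icc 0 a ∪ Ioi a := (Set.Icc_union_Ioi_eq_Ici ha).symm
  rw [hsplit, lintegral_union measurableSet_Ioi ((Set.Iic_disjoint_Ioi le_rfl).mono Set.Icc_subset_Iic_self le_rfl)]
  have h2 : ∫⁻ x in Ioi a, ENNReal.ofReal (a - x) = 0 := by
    rw [setLIntegral_congr_fun measurableSet_Ioi (fun x hx => by
      rw [ENNReal.ofReal_eq_zero.2 (by simp at hx; linarith)])]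
    simp
  rw [h2, add_zero]
  have hint : Integrable (fun x => a - x) (volume.restrict (Icc 0 a)) :=
    (continuous_const.sub continuous_id).integrableOn_Icc.integrable
  rw [← ofReal_integral_eq_lintegral_ofReal hint ((ae_restrict_iff' measurableSet_Icc).2
      (ae_of_all _ fun x hx => by simp at hx ⊢; linarith [hx.2]))]
  congr 1
  rw [MeasureTheory.integral_Icc_eq_integral_Ioc, ← intervalIntegral.integral_of_le ha]
  have : ∫ x in (0:ℝ)..a, (a - x) = a * a - (a^2 - 0^2)/2 := by
    rw [intervalIntegral.integral_sub intervalIntegrable_const intervalIntegral.intervalIntegrable_id,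
      intervalIntegral.integral_const, integral_id]
    simp [smul_eq_mul]
  rw [this]; ring

lemma vol_tri2 (b : ℝ) (hb : 0 ≤ b) :
    volume {y : Fin 2 → ℝ | 0 ≤ y 0 ∧ 0 ≤ y 1 ∧ y 0 + y 1 ≤ b} = ENNReal.ofReal (b^2/2) := by
  have mp := MeasureTheory.volume_preserving_finTwoArrow ℝ
  have hsm : MeasurableSet {p : ℝ × ℝ | 0 ≤ p.1 ∧ 0 ≤ p.2 ∧ p.1 + p.2 ≤ b} := by
    simp only [setOf_and]
    exact MeasurableSet.inter (measurableSet_le (by fun_prop) (by fun_prop))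
      (MeasurableSet.inter (measurableSet_le (by fun_prop) (by fun_prop))
        (measurableSet_le (by fun_prop) (by fun_prop)))
  have hpre : {y : Fin 2 → ℝ | 0 ≤ y 0 ∧ 0 ≤ y 1 ∧ y 0 + y 1 ≤ b}
      = (MeasurableEquiv.finTwoArrow : (Fin 2 → ℝ) ≃ᵐ ℝ × ℝ) ⁻¹'
        {p : ℝ × ℝ | 0 ≤ p.1 ∧ 0 ≤ p.2 ∧ p.1 + p.2 ≤ b} := by
    ext y
    simp [MeasurableEquiv.finTwoArrow]
  rw [hpre, mp.measure_preimage hsm.nullMeasurableSet, vol_tri b hb]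

lemma integ1 : ∫ x in (0:ℝ)..1, ((1:ℝ)-x)^2/2 = 1/6 := by
  have h := intervalIntegral.integral_comp_sub_left (a := (0:ℝ)) (b := 1) (fun u : ℝ => u^2/2) 1
  simp only [sub_zero, sub_self] at h
  rw [h, intervalIntegral.integral_div, integral_pow]
  norm_num

lemma vol_simplex3 :
    volume {x : Fin 3 → ℝ | 0 ≤ x 0 ∧ 0 ≤ x 1 ∧ 0 ≤ x 2 ∧ x 0 + x 1 + x 2 ≤ 1}
      = ENNReal.ofReal (1/6) := by
  have mp := MeasureTheory.volume_preserving_piFinSuccAbove (fun _ : Fin 3 => ℝ) 0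
  set t : Set (ℝ × (Fin 2 → ℝ)) :=
    {p | 0 ≤ p.1 ∧ 0 ≤ p.2 0 ∧ 0 ≤ p.2 1 ∧ p.1 + p.2 0 + p.2 1 ≤ 1} with ht
  have hsnd : Measurable fun p : ℝ × (Fin 2 → ℝ) => p.2 := measurable_snd
  have htm : MeasurableSet t := by
    rw [ht]
    simp only [setOf_and]
    exact MeasurableSet.inter (measurableSet_le (by fun_prop) (by fun_prop))
      (MeasurableSet.inter (measurableSet_le (by fun_prop) (by fun_prop))
        (MeasurableSet.inter (measurableSet_le (by fun_prop) (by fun_prop))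
          (measurableSet_le (by fun_prop) (by fun_prop))))
  have hpre : {x : Fin 3 → ℝ | 0 ≤ x 0 ∧ 0 ≤ x 1 ∧ 0 ≤ x 2 ∧ x 0 + x 1 + x 2 ≤ 1}
      = (MeasurableEquiv.piFinSuccAbove (fun _ : Fin 3 => ℝ) 0) ⁻¹' t := by
    ext x
    have h1 : (MeasurableEquiv.piFinSuccAbove (fun _ : Fin 3 => ℝ) 0) x
        = (x 0, fun j => x j.succ) := rfl
    simp only [mem_preimage, h1, ht, mem_setOf_eq, Fin.succ_zero_eq_one, Fin.succ_one_eq_two]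
  rw [hpre, mp.measure_preimage htm.nullMeasurableSet]
  rw [MeasureTheory.Measure.volume_eq_prod, Measure.prod_apply htm]
  have hslice : (fun x => volume (Prod.mk x ⁻¹' t))
      = fun x => (Icc (0:ℝ) 1).indicator (fun x => ENNReal.ofReal ((1-x)^2/2)) x := by
    funext x
    have hpt : Prod.mk x ⁻¹' t
        = if 0 ≤ x then {y : Fin 2 → ℝ | 0 ≤ y 0 ∧ 0 ≤ y 1 ∧ y 0 + y 1 ≤ 1 - x} else ∅ := by
      by_cases hx : 0 ≤ x
      · rw [if_pos hx]; ext y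
        simp only [ht, mem_preimage, mem_setOf_eq]
        constructor
        · rintro ⟨_, h1, h2, h3⟩; exact ⟨h1, h2, by linarith⟩
        · rintro ⟨h1, h2, h3⟩; exact ⟨hx, h1, h2, by linarith⟩
      · rw [if_neg hx]; ext y
        simp only [ht, mem_preimage, mem_setOf_eq, mem_empty_iff_false, iff_false]
        rintro ⟨h0, -⟩; exact hx h0
    rw [hpt]
    by_cases hx : 0 ≤ x
    · by_cases hx1 : x ≤ 1
      · rw [if_pos hx, vol_tri2 _ (by linarith), Set.indicator_of_mem (mem_Icc.2 ⟨hx, hx1⟩)]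
      · rw [if_pos hx, Set.indicator_of_notMem (by simp [mem_Icc, hx1]),
          show {y : Fin 2 → ℝ | 0 ≤ y 0 ∧ 0 ≤ y 1 ∧ y 0 + y 1 ≤ 1 - x} = ∅ from
            eq_empty_iff_forall_notMem.2 fun y ⟨h1, h2, h3⟩ => by push_neg at hx1; linarith]
        simp
    · rw [if_neg hx, Set.indicator_of_notMem (by simp [mem_Icc]; intro h; exact absurd h hx)]
      simp
  rw [hslice, lintegral_indicator measurableSet_Icc _]
  have hint : Integrable (fun x => ((1:ℝ)-x)^2/2) (volume.restrict (Icc (0:ℝ) 1)) :=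
    (Continuous.div_const ((continuous_const.sub continuous_id).pow 2) 2).integrableOn_Icc.integrable
  rw [← ofReal_integral_eq_lintegral_ofReal hint (ae_of_all _ fun x => by positivity)]
  rw [MeasureTheory.integral_Icc_eq_integral_Ioc,
    ← intervalIntegral.integral_of_le (by norm_num : (0:ℝ) ≤ 1), integ1]


lemma comb4_in_ball (x1 y1 z1 x2 y2 z2 x3 y3 z3 x4 y4 z4 b1 b2 b3 b4 : ℝ)
    (h1 : x1^2+y1^2+z1^2 ≤ 1) (h2 : x2^2+y2^2+z2^2 ≤ 1)
    (h3 : x3^2+y3^2+z3^2 ≤ 1) (h4 : x4^2+y4^2+z4^2 ≤ 1)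
    (hb1 : 0 ≤ b1) (hb2 : 0 ≤ b2) (hb3 : 0 ≤ b3) (hb4 : 0 ≤ b4)
    (hsum : b1+b2+b3+b4 = 1) :
    (b1*x1+b2*x2+b3*x3+b4*x4)^2 + (b1*y1+b2*y2+b3*y3+b4*y4)^2
      + (b1*z1+b2*z2+b3*z3+b4*z4)^2 ≤ 1 := by
  have p12 : 0 ≤ b1*b2*((x1-x2)^2+(y1-y2)^2+(z1-z2)^2) := by positivity
  have p13 : 0 ≤ b1*b3*((x1-x3)^2+(y1-y3)^2+(z1-z3)^2) := by positivity
  have p14 : 0 ≤ b1*b4*((x1-x4)^2+(y1-y4)^2+(z1-z4)^2) := by positivity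
  have p23 : 0 ≤ b2*b3*((x2-x3)^2+(y2-y3)^2+(z2-z3)^2) := by positivity
  have p24 : 0 ≤ b2*b4*((x2-x4)^2+(y2-y4)^2+(z2-z4)^2) := by positivity
  have p34 : 0 ≤ b3*b4*((x3-x4)^2+(y3-y4)^2+(z3-z4)^2) := by positivity
  have e1 : b1*(x1^2+y1^2+z1^2) ≤ b1 := by
    calc b1*(x1^2+y1^2+z1^2) ≤ b1*1 := mul_le_mul_of_nonneg_left h1 hb1
    _ = b1 := mul_one _
  have e2 : b2*(x2^2+y2^2+z2^2) ≤ b2 := by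
    calc b2*(x2^2+y2^2+z2^2) ≤ b2*1 := mul_le_mul_of_nonneg_left h2 hb2
    _ = b2 := mul_one _
  have e3 : b3*(x3^2+y3^2+z3^2) ≤ b3 := by
    calc b3*(x3^2+y3^2+z3^2) ≤ b3*1 := mul_le_mul_of_nonneg_left h3 hb3
    _ = b3 := mul_one _
  have e4 : b4*(x4^2+y4^2+z4^2) ≤ b4 := by
    calc b4*(x4^2+y4^2+z4^2) ≤ b4*1 := mul_le_mul_of_nonneg_left h4 hb4
    _ = b4 := mul_one _
  have key : (b1*x1+b2*x2+b3*x3+b4*x4)^2 + (b1*y1+b2*y2+b3*y3+b4*y4)^2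
      + (b1*z1+b2*z2+b3*z3+b4*z4)^2
      = b1*(x1^2+y1^2+z1^2) + b2*(x2^2+y2^2+z2^2) + b3*(x3^2+y3^2+z3^2) + b4*(x4^2+y4^2+z4^2)
        - (b1*b2*((x1-x2)^2+(y1-y2)^2+(z1-z2)^2) + b1*b3*((x1-x3)^2+(y1-y3)^2+(z1-z3)^2)
          + b1*b4*((x1-x4)^2+(y1-y4)^2+(z1-z4)^2) + b2*b3*((x2-x3)^2+(y2-y3)^2+(z2-z3)^2)
          + b2*b4*((x2-x4)^2+(y2-y4)^2+(z2-z4)^2) + b3*b4*((x3-x4)^2+(y3-y4)^2+(z3-z4)^2)) := by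
    linear_combination (b1*(x1^2+y1^2+z1^2) + b2*(x2^2+y2^2+z2^2) + b3*(x3^2+y3^2+z3^2)
      + b4*(x4^2+y4^2+z4^2)) * hsum
  linarith


lemma cos72_eq : Real.cos (72 * π / 180) = (Real.sqrt 5 - 1)/4 := by
  have h : (72 : ℝ) * π / 180 = 2 * (π / 5) := by ring
  rw [h, Real.cos_two_mul, Real.cos_pi_div_five]
  have h5 : Real.sqrt 5 ^ 2 = 5 := Real.sq_sqrt (by norm_num)
  linear_combination h5 / 8

lemma c72_bounds : 0.30901697 ≤ Real.cos (72 * π / 180) ∧ Real.cos (72 * π / 180) ≤ 0.309017 := by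
  rw [cos72_eq]
  have h5 : Real.sqrt 5 ^ 2 = 5 := Real.sq_sqrt (by norm_num)
  have h5n : 0 ≤ Real.sqrt 5 := Real.sqrt_nonneg 5
  constructor <;> nlinarith [h5, h5n]

lemma s72_bounds : 0.9510565 ≤ Real.sin (72 * π / 180) ∧ Real.sin (72 * π / 180) ≤ 0.9510566 := by
  have hnn : 0 ≤ Real.sin (72 * π / 180) := by
    apply Real.sin_nonneg_of_nonneg_of_le_pi
    · positivity
    · nlinarith [Real.pi_pos]
  have hsq : Real.sin (72 * π / 180) ^ 2 = 1 - Real.cos (72 * π / 180) ^ 2 := by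
    have := Real.sin_sq_add_cos_sq (72 * π / 180)
    linarith
  obtain ⟨hc1, hc2⟩ := c72_bounds
  constructor <;> nlinarith [hsq, hnn, hc1, hc2]


lemma mem_hull4 {E : Type*} [AddCommGroup E] [Module ℝ E] (w1 w2 w3 w4 : E) {a b c d : ℝ}
    (ha : 0 ≤ a) (hb : 0 ≤ b) (hc : 0 ≤ c) (hd : 0 ≤ d) (hsum : a + b + c + d = 1) :
    a • w1 + b • w2 + c • w3 + d • w4 ∈ convexHull ℝ ({w1, w2, w3, w4} : Set E) := by
  have h := Finset.centerMass_mem_convexHull (s := ({w1, w2, w3, w4} : Set E))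
    (Finset.univ : Finset (Fin 4)) (w := ![a, b, c, d])
    (by intro i _; fin_cases i <;> simpa)
    (by simp [Fin.sum_univ_four, hsum])
    (z := ![w1, w2, w3, w4]) (by intro i _; fin_cases i <;> simp)
  rw [Finset.centerMass] at h
  simpa [Fin.sum_univ_four, hsum] using h

lemma hull4_repr {E : Type*} [AddCommGroup E] [Module ℝ E] {w1 w2 w3 w4 x : E}
    (hx : x ∈ convexHull ℝ ({w1, w2, w3, w4} : Set E)) :
    ∃ a b c d : ℝ, 0 ≤ a ∧ 0 ≤ b ∧ 0 ≤ c ∧ 0 ≤ d ∧ a + b + c + d = 1 ∧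
      x = a • w1 + b • w2 + c • w3 + d • w4 := by
  rw [convexHull_insert (by simp), convexHull_insert (by simp), convexHull_pair] at hx
  rw [mem_convexJoin] at hx
  obtain ⟨x1, hx1, y, hy, hseg⟩ := hx
  rw [mem_singleton_iff] at hx1
  subst hx1
  rw [mem_convexJoin] at hy
  obtain ⟨x2, hx2, z, hz, hseg2⟩ := hy
  rw [mem_singleton_iff] at hx2
  subst hx2
  obtain ⟨u3, v3, hu3, hv3, huv3, hz'⟩ := hz
  obtain ⟨u2, v2, hu2, hv2, huv2, hy'⟩ := hseg2
  obtain ⟨u1, v1, hu1, hv1, huv1, hx'⟩ := hseg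
  refine ⟨u1, v1 * u2, v1 * v2 * u3, v1 * v2 * v3, hu1, mul_nonneg hv1 hu2,
    mul_nonneg (mul_nonneg hv1 hv2) hu3, mul_nonneg (mul_nonneg hv1 hv2) hv3,
    by linear_combination huv1 + v1 * huv2 + v1 * v2 * huv3, ?_⟩
  rw [← hx', ← hy', ← hz']
  module

lemma hull_basis_eq_simplex :
    convexHull ℝ ({0, Pi.single 0 1, Pi.single 1 1, Pi.single 2 1} : Set (Fin 3 → ℝ))
      = {x : Fin 3 → ℝ | 0 ≤ x 0 ∧ 0 ≤ x 1 ∧ 0 ≤ x 2 ∧ x 0 + x 1 + x 2 ≤ 1} := by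
  apply Subset.antisymm
  · apply convexHull_min
    · rintro x (rfl | rfl | rfl | rfl) <;>
        simp [Pi.single_apply] <;> norm_num
    · rintro x ⟨hx0, hx1, hx2, hxs⟩ y ⟨hy0, hy1, hy2, hys⟩ a b ha hb hab
      refine ⟨?_, ?_, ?_, ?_⟩ <;> simp only [Pi.add_apply, Pi.smul_apply, smul_eq_mul] <;> nlinarith
  · rintro x ⟨hx0, hx1, hx2, hxs⟩
    have hrepr : x = (1 - x 0 - x 1 - x 2) • (0 : Fin 3 → ℝ)
        + x 0 • (Pi.single 0 1 : Fin 3 → ℝ) + x 1 • (Pi.single 1 1 : Fin 3 → ℝ) + x 2 • (Pi.single 2 1 : Fin 3 → ℝ) := by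
      funext i
      fin_cases i <;> simp [Pi.single_apply]
    rw [hrepr]
    exact mem_hull4 _ _ _ _ (by linarith) hx0 hx1 hx2 (by ring)

lemma vol_tet (a b c d : Fin 3 → ℝ) :
    volume (convexHull ℝ ({a, b, c, d} : Set (Fin 3 → ℝ)))
      = ENNReal.ofReal (|Matrix.det (Matrix.of ![b - a, c - a, d - a])| / 6) := by
  set M : Matrix (Fin 3) (Fin 3) ℝ := Matrix.of ![b - a, c - a, d - a] with hM
  set L : (Fin 3 → ℝ) →ₗ[ℝ] (Fin 3 → ℝ) := Matrix.toLin' M.transpose with hL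
  have hLval : ∀ v : Fin 3 → ℝ, L v = fun i => M 0 i * v 0 + M 1 i * v 1 + M 2 i * v 2 := by
    intro v; funext i
    simp [hL, Matrix.toLin'_apply, Matrix.mulVec, dotProduct, Fin.sum_univ_three,
      Matrix.transpose_apply]
  have himg : ⇑L '' ({0, Pi.single 0 1, Pi.single 1 1, Pi.single 2 1} : Set (Fin 3 → ℝ))
      = {0, b - a, c - a, d - a} := by
    rw [Set.image_insert_eq, Set.image_insert_eq, Set.image_insert_eq, Set.image_singleton]
    congr 1
    · exact map_zero L
    congr 1
    · rw [hLval]; funext i; simp [Pi.single_apply, hM]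
    congr 1
    · rw [hLval]; funext i; simp [Pi.single_apply, hM]
    congr 1
    · rw [hLval]; funext i; simp [Pi.single_apply, hM]
  have htrans : ({a, b, c, d} : Set (Fin 3 → ℝ)) = a +ᵥ ({0, b - a, c - a, d - a} : Set (Fin 3 → ℝ)) := by
    simp only [Set.vadd_set_insert, Set.vadd_set_singleton, vadd_eq_add]
    congr 1 <;> [simp; skip]
    congr 1 <;> [module; skip]
    congr 1 <;> [module; skip]
    congr 1
    module
  rw [htrans, convexHull_vadd, ← himg, ← LinearMap.image_convexHull, hull_basis_eq_simplex]
  rw [measure_vadd, MeasureTheory.Measure.addHaar_image_linearMap, vol_simplex3]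
  rw [hL, LinearMap.det_toLin', Matrix.det_transpose]
  rw [← ENNReal.ofReal_mul (abs_nonneg _)]
  congr 1
  ring

end Aux

open Real MeasureTheory

/-- Let `S` be the part of the tetrahedron `T` (with vertices `p₀ = (0,0,2H)`, `p₁ = (0,R,H)`,
`p₂ = (0,0,H)`, `p₃ = (R·sin 72°, R·cos 72°, H)`, where `H ≈ 0.760071`, `R ≈ 0.649841` and
`H² + R² = 1`) lying outside the closed unit ball centered at the origin.  Then
`vol(T ∩ {z ≥ 1}) ≤ vol(S) ≤ vol(tetrahedron p₀p₁p₃p₄)` where `p₄ = (0,0,1)`; numerically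
`0.0163 ≤ vol(S) ≤ 0.0349`. -/
theorem stmt_12 (H R : ℝ)
    (hH : |H - 0.760071| < 1e-6) (hR : |R - 0.649841| < 1e-6) (hHR : H ^ 2 + R ^ 2 = 1) :
    let p₀ : Fin 3 → ℝ := ![0, 0, 2 * H]
    let p₁ : Fin 3 → ℝ := ![0, R, H]
    let p₂ : Fin 3 → ℝ := ![0, 0, H]
    let p₃ : Fin 3 → ℝ := ![R * Real.sin (72 * π / 180), R * Real.cos (72 * π / 180), H]
    let p₄ : Fin 3 → ℝ := ![0, 0, 1]
    let T : Set (Fin 3 → ℝ) := convexHull ℝ {p₀, p₁, p₂, p₃}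
    let S : Set (Fin 3 → ℝ) := T \ {v | v 0 ^ 2 + v 1 ^ 2 + v 2 ^ 2 ≤ 1}
    volume (T ∩ {v : Fin 3 → ℝ | 1 ≤ v 2}) ≤ volume S ∧
    volume S ≤ volume (convexHull ℝ {p₀, p₁, p₃, p₄}) ∧
    0.0163 ≤ (volume S).toReal ∧ (volume S).toReal ≤ 0.0349 := by
  intro p₀ p₁ p₂ p₃ p₄ T S
  rw [abs_lt] at hH hR
  have hH1 : (0.76007:ℝ) ≤ H := by linarith [hH.1]
  have hH2 : H ≤ 0.760072 := by linarith [hH.2]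
  have hR1 : (0.64984:ℝ) ≤ R := by linarith [hR.1]
  have hR2 : R ≤ 0.649842 := by linarith [hR.2]
  have hHpos : (0:ℝ) < H := by linarith
  have hRpos : (0:ℝ) < R := by linarith
  have h1H : (0:ℝ) < 1 - H := by linarith
  have h2H : (0:ℝ) < 2*H - 1 := by linarith
  obtain ⟨hs1, hs2⟩ := s72_bounds
  obtain ⟨hc1, hc2⟩ := c72_bounds
  have hsc : Real.sin (72*π/180)^2 + Real.cos (72*π/180)^2 = 1 := Real.sin_sq_add_cos_sq _
  set s72 : ℝ := Real.sin (72*π/180) with hs72def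
  set c72 : ℝ := Real.cos (72*π/180) with hc72def
  have hs0 : (0:ℝ) ≤ s72 := by linarith
  -- coordinates of a combination of the vertices of T
  have hcoords : ∀ (v : Fin 3 → ℝ) (a0 a1 a2 a3 : ℝ),
      v = a0 • p₀ + a1 • p₁ + a2 • p₂ + a3 • p₃ →
      v 0 = a3*(R*s72) ∧ v 1 = a1*R + a3*(R*c72) ∧ v 2 = a0*(2*H)+a1*H+a2*H+a3*H := by
    intro v a0 a1 a2 a3 h
    refine ⟨?_, ?_, ?_⟩ <;> rw [h] <;> simp [p₀, p₁, p₂, p₃, s72, c72] <;> ring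
  -- S is contained in the tetrahedron p₀ p₁ p₃ p₄
  have hSA : S ⊆ convexHull ℝ {p₀, p₁, p₃, p₄} := by
    rintro v ⟨hvT, hvnb⟩
    obtain ⟨a0, a1, a2, a3, h0, h1, h2, h3, hsum, hrep⟩ := hull4_repr hvT
    obtain ⟨hv0, hv1, hv2⟩ := hcoords v a0 a1 a2 a3 hrep
    by_cases hcase : a0 * (2*H - 1) ≤ a2 * (1 - H)
    · exfalso
      apply hvnb
      show v 0^2 + v 1^2 + v 2^2 ≤ 1
      have hb1 : (0:ℝ) ≤ a0*H/(1-H) := by positivity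
      have hb2 : (0:ℝ) ≤ a2 - a0*(2*H-1)/(1-H) := by
        rw [sub_nonneg, div_le_iff₀ h1H]; linarith
      have hbsum : a0*H/(1-H) + a1 + (a2 - a0*(2*H-1)/(1-H)) + a3 = 1 := by
        field_simp
        linear_combination (1-H)*hsum
      have n4 : (0:ℝ)^2+(0:ℝ)^2+(1:ℝ)^2 ≤ 1 := by norm_num
      have n1 : (0:ℝ)^2+R^2+H^2 ≤ 1 := by nlinarith [hHR]
      have n2 : (0:ℝ)^2+(0:ℝ)^2+H^2 ≤ 1 := by nlinarith [hHR, sq_nonneg R]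
      have n3 : (R*s72)^2+(R*c72)^2+H^2 ≤ 1 := le_of_eq (by linear_combination R^2 * hsc + hHR)
      have key := comb4_in_ball 0 0 1 0 R H 0 0 H (R*s72) (R*c72) H
        (a0*H/(1-H)) a1 (a2 - a0*(2*H-1)/(1-H)) a3 n4 n1 n2 n3 hb1 h1 hb2 h3 hbsum
      have e0 : (a0*H/(1-H))*0 + a1*0 + (a2 - a0*(2*H-1)/(1-H))*0 + a3*(R*s72) = v 0 := by
        rw [hv0]; ring
      have e1 : (a0*H/(1-H))*0 + a1*R + (a2 - a0*(2*H-1)/(1-H))*0 + a3*(R*c72) = v 1 := by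
        rw [hv1]; ring
      have e2 : (a0*H/(1-H))*1 + a1*H + (a2 - a0*(2*H-1)/(1-H))*H + a3*H = v 2 := by
        rw [hv2]; field_simp; ring
      rw [e0, e1, e2] at key
      exact key
    · push_neg at hcase
      have hb4 : (0:ℝ) ≤ a2*H/(2*H-1) := by positivity
      have hb0 : (0:ℝ) ≤ a0 - a2*(1-H)/(2*H-1) := by
        rw [sub_nonneg, div_le_iff₀ h2H]; linarith
      have hbsum : (a0 - a2*(1-H)/(2*H-1)) + a1 + a3 + a2*H/(2*H-1) = 1 := by
        rw [show (a0 - a2*(1-H)/(2*H-1)) + a1 + a3 + a2*H/(2*H-1)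
            = a0 + a1 + a3 + a2*((2*H-1)/(2*H-1)) by ring, div_self h2H.ne']
        linear_combination hsum
      have hveq : v = (a0 - a2*(1-H)/(2*H-1)) • p₀ + a1 • p₁ + a3 • p₃ + (a2*H/(2*H-1)) • p₄ := by
        rw [hrep]
        funext i
        fin_cases i <;> simp [p₀, p₁, p₂, p₃, p₄] <;> field_simp <;> ring
      rw [hveq]
      exact mem_hull4 _ _ _ _ hb0 h1 h3 hb4 hbsum
  -- conjunct 1
  have hsing : volume ({p₄} : Set (Fin 3 → ℝ)) = 0 := by
    rw [← Set.univ_pi_singleton p₄, volume_pi_pi]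
    simp [Real.volume_singleton]
  have hT1S : T ∩ {v : Fin 3 → ℝ | 1 ≤ v 2} ⊆ S ∪ {p₄} := by
    rintro v ⟨hvT, hv2⟩
    simp only [Set.mem_setOf_eq] at hv2
    by_cases hb : v 0^2 + v 1^2 + v 2^2 ≤ 1
    · right
      have h20 : v 2 = 1 := by nlinarith [sq_nonneg (v 0), sq_nonneg (v 1)]
      have h00 : v 0 = 0 := by nlinarith [sq_nonneg (v 1)]
      have h10 : v 1 = 0 := by nlinarith [sq_nonneg (v 0)]
      have : v = p₄ := by
        funext i
        fin_cases i <;> simp [p₄, h00, h10, h20]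
      simp [this]
    · left; exact ⟨hvT, hb⟩
  have c1 : volume (T ∩ {v : Fin 3 → ℝ | 1 ≤ v 2}) ≤ volume S := by
    calc volume (T ∩ {v : Fin 3 → ℝ | 1 ≤ v 2}) ≤ volume (S ∪ {p₄}) := measure_mono hT1S
    _ ≤ volume S + volume {p₄} := measure_union_le _ _
    _ = volume S := by rw [hsing, add_zero]
  -- volume of the tetrahedron A = hull {p₀,p₁,p₃,p₄}
  have hvolA : volume (convexHull ℝ {p₀, p₁, p₃, p₄})
      = ENNReal.ofReal ((2*H-1)*(R^2*s72)/6) := by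
    rw [vol_tet]
    congr 1
    have hdet : Matrix.det (Matrix.of ![p₁ - p₀, p₃ - p₀, p₄ - p₀]) = (2*H-1)*(R^2*s72) := by
      rw [Matrix.det_fin_three]
      simp [p₀, p₁, p₃, p₄, Matrix.of_apply, Pi.sub_apply]
      ring
    rw [hdet, abs_of_nonneg (by positivity)]
  have c2 : volume S ≤ volume (convexHull ℝ {p₀, p₁, p₃, p₄}) := measure_mono hSA
  -- the inner cut tetrahedron K
  set q1 : Fin 3 → ℝ := ![0, 0.787*R, 1.213*H] with hq1def
  set q2 : Fin 3 → ℝ := ![0, 0, 1.37*H] with hq2def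
  set q3 : Fin 3 → ℝ := ![0.787*(R*s72), 0.787*(R*c72), 1.213*H] with hq3def
  have hp0T : p₀ ∈ T := subset_convexHull ℝ _ (by simp)
  have hq1T : q1 ∈ T := by
    have : q1 = (0.213:ℝ) • p₀ + (0.787:ℝ) • p₁ + (0:ℝ) • p₂ + (0:ℝ) • p₃ := by
      funext i
      fin_cases i <;> simp [p₀, p₁, p₂, p₃, hq1def] <;> ring
    rw [this]
    exact mem_hull4 _ _ _ _ (by norm_num) (by norm_num) le_rfl le_rfl (by norm_num)
  have hq2T : q2 ∈ T := by
    have : q2 = (0.37:ℝ) • p₀ + (0:ℝ) • p₁ + (0.63:ℝ) • p₂ + (0:ℝ) • p₃ := by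
      funext i
      fin_cases i <;> simp [p₀, p₁, p₂, p₃, hq2def] <;> ring
    rw [this]
    exact mem_hull4 _ _ _ _ (by norm_num) le_rfl (by norm_num) le_rfl (by norm_num)
  have hq3T : q3 ∈ T := by
    have : q3 = (0.213:ℝ) • p₀ + (0:ℝ) • p₁ + (0:ℝ) • p₂ + (0.787:ℝ) • p₃ := by
      funext i
      fin_cases i <;> simp [p₀, p₁, p₂, p₃, hq3def, s72, c72] <;> ring
    rw [this]
    exact mem_hull4 _ _ _ _ (by norm_num) le_rfl le_rfl (by norm_num) (by norm_num)
  have hKT : convexHull ℝ {p₀, q1, q2, q3} ⊆ T := by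
    apply convexHull_min _ (convex_convexHull ℝ _)
    rintro x (rfl | rfl | rfl | rfl)
    exacts [hp0T, hq1T, hq2T, hq3T]
  have hKS : convexHull ℝ {p₀, q1, q2, q3} ⊆ S := by
    intro v hv
    refine ⟨hKT hv, ?_⟩
    simp only [Set.mem_setOf_eq, not_le]
    obtain ⟨a, b, c, d, ha, hb, hc, hd, hsum, hrep⟩ := hull4_repr hv
    have hv0 : v 0 = d*(0.787*(R*s72)) := by
      rw [hrep]; simp [p₀, hq1def, hq2def, hq3def]; try ring
    have hv1 : v 1 = b*(0.787*R) + d*(0.787*(R*c72)) := by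
      rw [hrep]; simp [p₀, hq1def, hq2def, hq3def]; try ring
    have hv2 : v 2 = a*(2*H) + b*(1.213*H) + c*(1.37*H) + d*(1.213*H) := by
      rw [hrep]; simp [p₀, hq1def, hq2def, hq3def]; try ring
    have w1 : (1.00002:ℝ) ≤ 0.961*(2*H) := by nlinarith
    have w2 : (1.00002:ℝ) ≤ 0.223*(0.787*R) + 0.961*(1.213*H) := by nlinarith
    have w3 : (1.00002:ℝ) ≤ 0.961*(1.37*H) := by nlinarith
    have w4 : (1.00002:ℝ) ≤ 0.162*(0.787*(R*s72)) + 0.223*(0.787*(R*c72)) + 0.961*(1.213*H) := by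
      nlinarith [mul_le_mul hR1 hs1 (by norm_num) (by linarith), mul_le_mul hR1 hc1 (by norm_num) (by linarith)]
    have hD : (1.00002:ℝ) ≤ 0.162*(v 0) + 0.223*(v 1) + 0.961*(v 2) := by
      rw [hv0, hv1, hv2]
      nlinarith [mul_le_mul_of_nonneg_left w1 ha, mul_le_mul_of_nonneg_left w2 hb,
        mul_le_mul_of_nonneg_left w3 hc, mul_le_mul_of_nonneg_left w4 hd]
    have hD2 : ((1.00002:ℝ))^2 ≤ (0.162*(v 0) + 0.223*(v 1) + 0.961*(v 2))^2 :=
      pow_le_pow_left₀ (by norm_num) hD 2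
    nlinarith [hD2, sq_nonneg (0.162*(v 1) - 0.223*(v 0)), sq_nonneg (0.162*(v 2) - 0.961*(v 0)),
      sq_nonneg (0.223*(v 2) - 0.961*(v 1))]
  have hvolK : volume (convexHull ℝ {p₀, q1, q2, q3})
      = ENNReal.ofReal (0.787^2*0.63*(H*(R^2*s72))/6) := by
    rw [vol_tet]
    congr 1
    have hdet : Matrix.det (Matrix.of ![q1 - p₀, q2 - p₀, q3 - p₀])
        = -(0.787^2*0.63*(H*(R^2*s72))) := by
      rw [Matrix.det_fin_three]
      simp [p₀, hq1def, hq2def, hq3def, Matrix.of_apply, Pi.sub_apply]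
      ring
    rw [hdet, abs_neg, abs_of_nonneg (by positivity)]
  -- numeric bounds
  have hAval : (2*H-1)*(R^2*s72)/6 ≤ 0.0349 := by
    have u1 : R^2 ≤ 0.4223 := by nlinarith
    have u2 : (2*H-1)*R^2 ≤ 0.2196568 := by nlinarith
    have u3 : (2*H-1)*(R^2*s72) ≤ 0.2196568*0.9510566 := by nlinarith [sq_nonneg R]
    nlinarith
  have hKval : (0.0163:ℝ) ≤ 0.787^2*0.63*(H*(R^2*s72))/6 := by
    have l1 : (0.42229:ℝ) ≤ R^2 := by nlinarith
    have l2 : (0.32097:ℝ) ≤ H*R^2 := by nlinarith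
    have l3 : (0.30526:ℝ) ≤ H*(R^2*s72) := by nlinarith
    nlinarith
  -- finish
  have hfin : volume S ≠ ⊤ := by
    apply ne_top_of_le_ne_top _ (c2.trans_eq hvolA)
    exact ENNReal.ofReal_ne_top
  have hKS' : ENNReal.ofReal (0.787^2*0.63*(H*(R^2*s72))/6) ≤ volume S :=
    hvolK ▸ measure_mono hKS
  have c3 : (0.0163:ℝ) ≤ (volume S).toReal := by
    have h := ENNReal.toReal_mono hfin hKS'
    rw [ENNReal.toReal_ofReal (by positivity)] at h
    linarith
  have c4 : (volume S).toReal ≤ 0.0349 := by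
    have h := ENNReal.toReal_mono ENNReal.ofReal_ne_top (c2.trans_eq hvolA)
    rw [ENNReal.toReal_ofReal (by positivity)] at h
    linarith
  exact ⟨c1, c2, c3, c4⟩
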